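/- For every t > 0 and every integer k ≥ 1, setting δ = t/M, the discrete sum ∑ δ^k (1−δ)^{−k(k+3)/2} (1−δ)^{(M−m₁) + ∑_{i=1}^{k−1}(i+1)(m_i−m_{i+1}) + (k+1)m_k}, taken over all integer sequences M ≥ m₁ > m₂ > ⋯ > m_k ≥ 1, converges as M → ∞ to e^{−t}(1 − e^{−t})^k / k!. -/

import Mathlib

open Filter Finset

lemma lemA (q : ℝ) : ∀ M k : ℕ,
    (∑ A ∈ (Finset.Icc 1 M).powersetCard k, q ^ (A.sum id)) * ∏ i ∈ Finset.range k, (1 - q ^ (i+1))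
      = (∏ i ∈ Finset.range k, q ^ (i+1)) * ∏ i ∈ Finset.range k, (1 - q ^ (M - i)) := by
  intro M
  induction M with
  | zero =>
    intro k
    match k with
    | 0 => simp
    | k + 1 =>
      have h1 : (Finset.Icc 1 0).powersetCard (k+1) = ∅ := by
        rw [Finset.powersetCard_eq_empty]; simp
      have h2 : (0:ℕ) ∈ Finset.range (k+1) := by simp
      have h3 : ∏ i ∈ Finset.range (k+1), (1 - q^((0:ℕ)-i)) = 0 :=
        Finset.prod_eq_zero h2 (by simp)
      rw [h1, h3, Finset.sum_empty, zero_mul, mul_zero]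
  | succ M ih =>
    intro k
    by_cases hbig : M + 1 < k
    · have h1 : (Finset.Icc 1 (M+1)).powersetCard k = ∅ := by
        rw [Finset.powersetCard_eq_empty, Nat.card_Icc]; omega
      have h2 : (M + 1 : ℕ) ∈ Finset.range k := Finset.mem_range.2 hbig
      have h3 : ∏ i ∈ Finset.range k, (1 - q^((M+1)-i)) = 0 :=
        Finset.prod_eq_zero h2 (by simp)
      rw [h1, h3, Finset.sum_empty, zero_mul, mul_zero]
    · match k with
      | 0 => simp
      | k + 1 =>
        have hk' : k ≤ M := by omega
        have hins : Finset.Icc 1 (M+1) = insert (M+1) (Finset.Icc 1 M) :=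
          (Finset.insert_Icc_right_eq_Icc_add_one (by omega)).symm
        have hnot : (M+1) ∉ Finset.Icc 1 M := by simp
        have hdisj : Disjoint ((Finset.Icc 1 M).powersetCard (k+1))
            (((Finset.Icc 1 M).powersetCard k).image (insert (M+1))) := by
          refine Finset.disjoint_left.2 fun A hA hA' => ?_
          have h1 : (M+1) ∉ A := fun h => hnot ((Finset.mem_powersetCard.1 hA).1 h)
          obtain ⟨B, hB, rfl⟩ := Finset.mem_image.1 hA'
          exact h1 (Finset.mem_insert_self _ _)
        have hinj : ∀ A ∈ (Finset.Icc 1 M).powersetCard k,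
            ∀ B ∈ (Finset.Icc 1 M).powersetCard k, insert (M+1) A = insert (M+1) B → A = B := by
          intro A hA B hB hAB
          have hAnot : (M+1) ∉ A := fun h => hnot ((Finset.mem_powersetCard.1 hA).1 h)
          have hBnot : (M+1) ∉ B := fun h => hnot ((Finset.mem_powersetCard.1 hB).1 h)
          have := congrArg (Finset.erase · (M+1)) hAB
          simpa [Finset.erase_insert, hAnot, hBnot] using this
        rw [hins, Finset.powersetCard_succ_insert hnot, Finset.sum_union hdisj,
          Finset.sum_image hinj]
        have hsum : ∑ A ∈ (Finset.Icc 1 M).powersetCard k, q ^ ((insert (M+1) A).sum id)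
            = q ^ (M+1) * ∑ A ∈ (Finset.Icc 1 M).powersetCard k, q ^ (A.sum id) := by
          rw [Finset.mul_sum]
          refine Finset.sum_congr rfl fun A hA => ?_
          have hAnot : (M+1) ∉ A := fun h => hnot ((Finset.mem_powersetCard.1 hA).1 h)
          rw [Finset.sum_insert hAnot, pow_add]
          rfl
        rw [hsum]
        have ih1 := ih (k+1)
        have ih2 := ih k
        have hsplit1 : ∏ i ∈ Finset.range (k+1), (1 - q^(M-i))
            = (∏ i ∈ Finset.range k, (1-q^(M-i))) * (1-q^(M-k)) := Finset.prod_range_succ _ _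
        have hsplit2 : ∏ i ∈ Finset.range (k+1), (1-q^(M+1-i))
            = (∏ i ∈ Finset.range k, (1-q^(M-i))) * (1-q^(M+1)) := by
          rw [Finset.prod_range_succ' (fun i => 1 - q^(M+1-i))]
          congr 1
          exact Finset.prod_congr rfl fun i _ => by rw [Nat.succ_sub_succ]
        have hsplit3 : ∏ i ∈ Finset.range (k+1), (1-q^(i+1))
            = (∏ i ∈ Finset.range k, (1-q^(i+1))) * (1-q^(k+1)) := Finset.prod_range_succ _ _
        have hsplit4 : ∏ i ∈ Finset.range (k+1), (q^(i+1))
            = (∏ i ∈ Finset.range k, (q^(i+1))) * q^(k+1) := Finset.prod_range_succ _ _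
        rw [hsplit3, hsplit1, hsplit4] at ih1
        rw [hsplit3, hsplit2, hsplit4]
        have e2 : q ^ (k + 1) * q ^ (M - k) = q ^ (M + 1) := by
          rw [← pow_add]; congr 1; omega
        linear_combination ih1 + (q^(M+1) * (1 - q^(k+1))) * ih2
          - ((∏ i ∈ Finset.range k, (q^(i+1))) * (∏ i ∈ Finset.range k, (1-q^(M-i)))) * e2

open scoped Classical in
lemma lemB (k : ℕ) (s : Finset ℕ) (g : (Fin k → ℕ) → ℝ) (G : Finset ℕ → ℝ)
    (hgG : ∀ m : Fin k → ℕ, StrictAnti m → g m = G (Finset.image m Finset.univ)) :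
    ∑ m ∈ Fintype.piFinset (fun _ : Fin k => s), (if StrictAnti m then g m else 0)
      = ∑ A ∈ s.powersetCard k, G A := by
  rw [← Finset.sum_filter]
  refine Finset.sum_bij' (fun m _ => Finset.image m Finset.univ)
    (fun A hA => fun i : Fin k =>
      A.orderEmbOfFin (Finset.mem_powersetCard.1 hA).2 i.rev) ?_ ?_ ?_ ?_ ?_
  · intro m hm
    rw [Finset.mem_filter] at hm
    obtain ⟨hm1, hm2⟩ := hm
    rw [Finset.mem_powersetCard]
    constructor
    · intro x hx
      obtain ⟨i, _, rfl⟩ := Finset.mem_image.1 hx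
      exact Fintype.mem_piFinset.1 hm1 i
    · rw [Finset.card_image_of_injective _ hm2.injective, Finset.card_univ, Fintype.card_fin]
  · intro A hA
    have hcard := (Finset.mem_powersetCard.1 hA).2
    have hsub := (Finset.mem_powersetCard.1 hA).1
    rw [Finset.mem_filter]
    constructor
    · rw [Fintype.mem_piFinset]
      intro i
      exact hsub (Finset.orderEmbOfFin_mem A hcard i.rev)
    · intro a b hab
      exact (A.orderEmbOfFin hcard).strictMono (Fin.rev_lt_rev.2 hab)
  · -- left inverse
    intro m hm
    rw [Finset.mem_filter] at hm
    obtain ⟨hm1, hm2⟩ := hm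
    funext i
    have hmono : StrictMono (m ∘ Fin.rev) := fun a b hab => hm2 (Fin.rev_lt_rev.2 hab)
    have hcard : (Finset.image m Finset.univ).card = k := by
      rw [Finset.card_image_of_injective _ hm2.injective, Finset.card_univ, Fintype.card_fin]
    have hval : ∀ x, (m ∘ Fin.rev) x ∈ Finset.image m Finset.univ := fun x =>
      Finset.mem_image_of_mem _ (Finset.mem_univ _)
    have := Finset.orderEmbOfFin_unique hcard hval hmono
    calc (Finset.image m Finset.univ).orderEmbOfFin _ i.rev
        = (m ∘ Fin.rev) i.rev := by rw [this]
      _ = m i := by simp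
  · -- right inverse
    intro A hA
    have hcard := (Finset.mem_powersetCard.1 hA).2
    ext b
    simp only [Finset.mem_image, Finset.mem_univ, true_and]
    constructor
    · rintro ⟨i, rfl⟩
      exact Finset.orderEmbOfFin_mem A hcard i.rev
    · intro hb
      have hb' : b ∈ Set.range (A.orderEmbOfFin hcard) := by
        rw [Finset.range_orderEmbOfFin]; exact hb
      obtain ⟨j, hj⟩ := hb'
      exact ⟨j.rev, by simpa using hj⟩
  · intro m hm
    rw [Finset.mem_filter] at hm
    exact hgG m hm.2

lemma lemC (M k : ℕ) (hk : 1 ≤ k) (m : Fin k → ℕ) (hm : StrictAnti m)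
    (h1 : ∀ i, 1 ≤ m i) (hM : ∀ i, m i ≤ M) :
    ((M - (fun j => if h : j < k then m ⟨j, h⟩ else 0) 0)
        + (∑ i ∈ Finset.range (k - 1),
            (i + 2) * ((fun j => if h : j < k then m ⟨j, h⟩ else 0) i
              - (fun j => if h : j < k then m ⟨j, h⟩ else 0) (i + 1)))
        + (k + 1) * (fun j => if h : j < k then m ⟨j, h⟩ else 0) (k - 1))
      = M + ∑ i, m i := by
  set μ : ℕ → ℕ := fun j => if h : j < k then m ⟨j, h⟩ else 0 with hμ
  have hμlt : ∀ j (h : j < k), μ j = m ⟨j, h⟩ := fun j h => dif_pos h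
  have hanti : ∀ i, i + 1 < k → μ (i + 1) ≤ μ i := by
    intro i h
    rw [hμlt i (by omega), hμlt (i+1) h]
    exact le_of_lt (hm (by exact Fin.mk_lt_mk.2 (by omega)))
  have hμ0M : μ 0 ≤ M := by rw [hμlt 0 (by omega)]; exact hM _
  -- work in ℤ
  have key : ((M - μ 0 : ℕ) : ℤ)
      + ((∑ i ∈ Finset.range (k - 1), (i + 2) * (μ i - μ (i + 1)) : ℕ) : ℤ)
      + ((k + 1) * μ (k - 1) : ℕ) = ((M + ∑ i, m i : ℕ) : ℤ) := by
    push_cast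
    rw [Nat.cast_sub hμ0M]
    have hcast : ∀ i ∈ Finset.range (k - 1),
        ((i : ℤ) + 2) * ((μ i - μ (i + 1) : ℕ) : ℤ)
          = ((i : ℤ) + 2) * (μ i : ℤ) - ((i : ℤ) + 3) * (μ (i+1) : ℤ) + (μ (i+1) : ℤ) := by
      intro i hi
      have hlt : i + 1 < k := by have := Finset.mem_range.1 hi; omega
      rw [Nat.cast_sub (hanti i hlt)]
      push_cast
      ring
    rw [Finset.sum_congr rfl hcast]
    have htel : ∑ i ∈ Finset.range (k - 1),
        (((i : ℤ) + 2) * (μ i : ℤ) - ((i : ℤ) + 3) * (μ (i+1) : ℤ) + (μ (i+1) : ℤ))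
        = (2 * (μ 0 : ℤ) - ((k : ℤ) + 1) * (μ (k-1) : ℤ))
          + ∑ i ∈ Finset.range (k - 1), (μ (i+1) : ℤ) := by
      rw [Finset.sum_add_distrib]
      congr 1
      calc ∑ i ∈ Finset.range (k-1), (((i : ℤ) + 2) * (μ i : ℤ) - ((i : ℤ) + 3) * (μ (i+1) : ℤ))
          = ∑ i ∈ Finset.range (k-1),
              (((i : ℤ) + 2) * (μ i : ℤ) - (((i+1 : ℕ) : ℤ) + 2) * (μ (i+1) : ℤ)) := by
            refine Finset.sum_congr rfl fun i _ => ?_; push_cast; ring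
        _ = ((0 : ℤ) + 2) * (μ 0 : ℤ) - (((k-1 : ℕ) : ℤ) + 2) * (μ (k-1) : ℤ) := by
            exact Finset.sum_range_sub' (fun i => ((i : ℕ) + 2 : ℤ) * (μ i : ℤ)) (k - 1)
        _ = 2 * (μ 0 : ℤ) - ((k : ℤ) + 1) * (μ (k-1) : ℤ) := by
            have : ((k - 1 : ℕ) : ℤ) = (k : ℤ) - 1 := by
              rw [Nat.cast_sub hk]; simp
            rw [this]; ring
    rw [htel]
    have hsum : ∑ i, (m i : ℤ) = (μ 0 : ℤ) + ∑ i ∈ Finset.range (k - 1), (μ (i+1) : ℤ) := by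
      have h1' : ∑ i, (m i : ℤ) = ∑ i ∈ Finset.range k, (μ i : ℤ) := by
        rw [← Fin.sum_univ_eq_sum_range (fun i => (μ i : ℤ))]
        refine Finset.sum_congr rfl fun i _ => ?_
        rw [hμlt i i.isLt]
      rw [h1']
      obtain ⟨k', rfl⟩ : ∃ k', k = k' + 1 := ⟨k - 1, by omega⟩
      rw [Finset.sum_range_succ' (fun i => (μ i : ℤ))]
      simp [add_comm]
    rw [hsum]
    push_cast
    ring
  exact_mod_cast key


open scoped Classical in
/-- With `δ = t/M`, the discrete sum
`∑ δ^k (1−δ)^{−k(k+3)/2} (1−δ)^{(M−m₁) + ∑_{i=1}^{k−1}(i+1)(m_i−m_{i+1}) + (k+1)m_k}`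
over all integer sequences `M ≥ m₁ > m₂ > ⋯ > m_k ≥ 1` converges, as `M → ∞`, to
`e^{−t}(1 − e^{−t})^k / k!`.
Here a sequence `(m₁, …, m_k)` is encoded as a strictly decreasing function
`m : Fin k → ℕ` with values in `{1, …, M}` (so `m_i = m (i-1)`), and `μ j`
denotes `m j` extended by `0` outside `Fin k`. -/
theorem riemann_sum_wild_term (t : ℝ) (ht : 0 < t) (k : ℕ) (hk : 1 ≤ k) :
    Tendsto
      (fun M : ℕ =>
        ∑ m ∈ Fintype.piFinset (fun _ : Fin k => Finset.Icc 1 M),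
          if StrictAnti m then
            let μ : ℕ → ℕ := fun j => if h : j < k then m ⟨j, h⟩ else 0
            (t / M) ^ k /
                (1 - t / M) ^ (k * (k + 3) / 2) *
              (1 - t / M) ^
                ((M - μ 0) + (∑ i ∈ Finset.range (k - 1), (i + 2) * (μ i - μ (i + 1))) +
                  (k + 1) * μ (k - 1))
          else 0)
      atTop
      (nhds (Real.exp (-t) * (1 - Real.exp (-t)) ^ k / (k.factorial : ℝ))) := by
  set K := k * (k + 3) / 2 with hK
  set q : ℕ → ℝ := fun M => 1 - t / M with hqdef
  set G : ℕ → ℝ := fun M =>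
    q M ^ M * ((∏ i ∈ Finset.range k, q M ^ (i+1)) / q M ^ K) *
      ∏ i ∈ Finset.range k, ((1 - q M ^ (M - i)) / ∑ j ∈ Finset.range (i+1), q M ^ j) with hGdef
  have hq1 : Tendsto q atTop (nhds 1) := by
    have h0 := tendsto_const_div_atTop_nhds_zero_nat t
    have := tendsto_const_nhds.sub h0 (a := (1:ℝ))
    simpa using this
  have hqM : Tendsto (fun M : ℕ => q M ^ M) atTop (nhds (Real.exp (-t))) := by
    have := Real.tendsto_one_add_div_pow_exp (-t)
    refine this.congr fun M => ?_
    simp [hqdef, sub_eq_add_neg, neg_div]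
  have hev : ∀ᶠ M : ℕ in atTop, t < M :=
    tendsto_natCast_atTop_atTop.eventually_gt_atTop t
  have hfact : ∏ i ∈ Finset.range k, ((i:ℝ)+1) = (k.factorial : ℝ) := by
    rw [← Finset.prod_range_add_one_eq_factorial k]
    push_cast
    rfl
  -- limit of G
  have h2 : Tendsto (fun M => (∏ i ∈ Finset.range k, q M ^ (i+1)) / q M ^ K) atTop (nhds 1) := by
    have ha : Tendsto (fun M => ∏ i ∈ Finset.range k, q M ^ (i+1)) atTop
        (nhds (∏ _i ∈ Finset.range k, (1:ℝ))) :=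
      tendsto_finset_prod _ fun i _ => by simpa using hq1.pow (i+1)
    have hb : Tendsto (fun M => q M ^ K) atTop (nhds 1) := by simpa using hq1.pow K
    simpa [Pi.div_def] using ha.div hb one_ne_zero
  have hfac : ∀ i : ℕ, Tendsto
      (fun M : ℕ => (1 - q M ^ (M - i)) / ∑ j ∈ Finset.range (i+1), q M ^ j)
      atTop (nhds ((1 - Real.exp (-t)) / ((i:ℝ)+1))) := by
    intro i
    have hnum : Tendsto (fun M : ℕ => q M ^ (M - i)) atTop (nhds (Real.exp (-t))) := by
      have hdiv : Tendsto (fun M : ℕ => q M ^ M / q M ^ i) atTop (nhds (Real.exp (-t))) := by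
        have := hqM.div (hq1.pow i) (by simp)
        simpa [Pi.div_def] using this
      refine hdiv.congr' ?_
      filter_upwards [hev, eventually_ge_atTop i] with M htM hiM
      have hM0 : (0:ℝ) < M := lt_trans ht htM
      have hq0 : q M ≠ 0 := by
        have : t / M < 1 := (div_lt_one hM0).2 htM
        simp only [hqdef]
        linarith
      rw [pow_sub₀ _ hq0 hiM, div_eq_mul_inv]
    have hden : Tendsto (fun M : ℕ => ∑ j ∈ Finset.range (i+1), q M ^ j) atTop
        (nhds ((i:ℝ)+1)) := by
      have := tendsto_finset_sum (Finset.range (i+1)) (fun j (_ : j ∈ Finset.range (i+1)) =>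
        hq1.pow j)
      simpa using this
    exact (tendsto_const_nhds.sub hnum).div hden (by positivity)
  have hGfull : Tendsto G atTop
      (nhds (Real.exp (-t) * (1 - Real.exp (-t)) ^ k / (k.factorial : ℝ))) := by
    have hmain := (hqM.mul h2).mul (tendsto_finset_prod (Finset.range k) fun i _ => hfac i)
    have hval : Real.exp (-t) * (1 - Real.exp (-t)) ^ k / (k.factorial : ℝ)
        = Real.exp (-t) * 1 *
          ∏ i ∈ Finset.range k, ((1 - Real.exp (-t)) / ((i:ℝ)+1)) := by
      rw [Finset.prod_div_distrib, Finset.prod_const, Finset.card_range, hfact]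
      ring
    rw [hval]
    exact hmain
  refine Tendsto.congr' ?_ hGfull
  filter_upwards [hev] with M htM
  have hM0 : (0:ℝ) < M := lt_trans ht htM
  have hδ : 0 < t / M := div_pos ht hM0
  have hδ1 : t / M < 1 := (div_lt_one hM0).2 htM
  have hqeq : q M = 1 - t / M := rfl
  have hq0 : 0 < q M := by rw [hqeq]; linarith
  have hqlt1 : q M < 1 := by rw [hqeq]; linarith
  have h1q : 1 - q M = t / M := by rw [hqeq]; ring
  have hSpos : ∀ i : ℕ, 0 < ∑ j ∈ Finset.range (i+1), q M ^ j := fun i =>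
    Finset.sum_pos (fun j _ => pow_pos hq0 j) (Finset.nonempty_range_iff.2 (Nat.succ_ne_zero i))
  have hgeom : ∀ i : ℕ, 1 - q M ^ (i+1) = (t / M) * ∑ j ∈ Finset.range (i+1), q M ^ j := by
    intro i
    rw [← h1q]
    linear_combination geom_sum_mul (q M) (i+1)
  have hDpos : 0 < ∏ i ∈ Finset.range k, (1 - q M ^ (i+1)) := by
    refine Finset.prod_pos fun i _ => ?_
    have : q M ^ (i+1) < 1 := pow_lt_one₀ hq0.le hqlt1 (Nat.succ_ne_zero i)
    linarith
  have hPSpos : 0 < ∏ i ∈ Finset.range k, ∑ j ∈ Finset.range (i+1), q M ^ j :=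
    Finset.prod_pos fun i _ => hSpos i
  symm
  calc
    ∑ m ∈ Fintype.piFinset (fun _ : Fin k => Finset.Icc 1 M),
        (if StrictAnti m then
          let μ : ℕ → ℕ := fun j => if h : j < k then m ⟨j, h⟩ else 0
          (t / M) ^ k / (1 - t / M) ^ K *
            (1 - t / M) ^
              ((M - μ 0) + (∑ i ∈ Finset.range (k - 1), (i + 2) * (μ i - μ (i + 1))) +
                (k + 1) * μ (k - 1))
        else 0)
      = ∑ m ∈ Fintype.piFinset (fun _ : Fin k => Finset.Icc 1 M),
          (if StrictAnti m then
            (t / M) ^ k / q M ^ K * q M ^ (M + ∑ i, m i) else 0) := by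
        refine Finset.sum_congr rfl fun m hm => ?_
        split_ifs with h
        · have hmem := fun i => Finset.mem_Icc.1 (Fintype.mem_piFinset.1 hm i)
          have hC := lemC M k hk m h (fun i => (hmem i).1) (fun i => (hmem i).2)
          simp only [hqeq]
          rw [hC]
        · rfl
    _ = ∑ A ∈ (Finset.Icc 1 M).powersetCard k,
          ((t / M) ^ k / q M ^ K * q M ^ (M + A.sum id)) := by
        refine lemB k _ _ _ fun m hm => ?_
        have himg : (Finset.image m Finset.univ).sum id = ∑ i, m i :=
          Finset.sum_image fun x _ y _ hxy => hm.injective hxy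
        rw [himg]
    _ = (t / M) ^ k / q M ^ K *
          (q M ^ M * ∑ A ∈ (Finset.Icc 1 M).powersetCard k, q M ^ (A.sum id)) := by
        rw [Finset.mul_sum, Finset.mul_sum]
        refine Finset.sum_congr rfl fun A _ => ?_
        rw [pow_add]
    _ = G M := by
        have hA := lemA (q M) M k
        have hS : ∑ A ∈ (Finset.Icc 1 M).powersetCard k, q M ^ (A.sum id)
            = (∏ i ∈ Finset.range k, q M ^ (i+1)) * (∏ i ∈ Finset.range k, (1 - q M ^ (M - i)))
              / ∏ i ∈ Finset.range k, (1 - q M ^ (i+1)) := by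
          rw [eq_div_iff hDpos.ne']
          exact hA
        have hD : ∏ i ∈ Finset.range k, (1 - q M ^ (i+1))
            = (t / M) ^ k * ∏ i ∈ Finset.range k, ∑ j ∈ Finset.range (i+1), q M ^ j := by
          rw [Finset.prod_congr rfl fun i _ => hgeom i, Finset.prod_mul_distrib,
            Finset.prod_const, Finset.card_range]
        have hbeta : G M = q M ^ M * ((∏ i ∈ Finset.range k, q M ^ (i+1)) / q M ^ K) *
            ((∏ i ∈ Finset.range k, (1 - q M ^ (M - i))) /
              ∏ i ∈ Finset.range k, ∑ j ∈ Finset.range (i+1), q M ^ j) := by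
          simp only [hGdef]
          rw [Finset.prod_div_distrib]
        rw [hS, hD, hbeta]
        have hqKpos : (0:ℝ) < q M ^ K := pow_pos hq0 K
        generalize (∏ i ∈ Finset.range k, q M ^ (i+1)) = Qk
        generalize hRk : (∏ i ∈ Finset.range k, (1 - q M ^ (M - i))) = Rk
        generalize hPS : (∏ i ∈ Finset.range k, ∑ j ∈ Finset.range (i+1), q M ^ j) = PS
        generalize hqm : q M ^ M = qMM
        generalize hqk : q M ^ K = qK at hqKpos
        generalize hdk : (t/(M:ℝ))^k = dk
        rw [hPS] at hPSpos
        have hdk0 : dk ≠ 0 := by rw [← hdk]; positivity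
        field_simp
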